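/- For a complex number α with real part greater than 1/2, the integral ∫₀¹ (1 − x^α − (1−x)^α)·(x(1−x))^{−3/2} dx equals 4α·(B(α + 1/2, 1/2) − B(3/2, α − 1/2)), where B is the Beta function. -/

import Mathlib

open Complex MeasureTheory Set Filter intervalIntegral
open scoped Topology

noncomputable def ff (α : ℂ) (x : ℝ) : ℂ :=
  (1 - (x : ℂ) ^ α - ((1 - x : ℝ) : ℂ) ^ α) * (((x * (1 - x) : ℝ) ^ (-(3 / 2) : ℝ) : ℝ) : ℂ)

noncomputable def GG (α : ℂ) (x : ℝ) : ℂ :=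
  4 * α * ((x : ℂ) ^ (α + 1 / 2 - 1) * (1 - (x : ℂ)) ^ ((1 / 2 : ℂ) - 1)
    - (x : ℂ) ^ ((3 / 2 : ℂ) - 1) * (1 - (x : ℂ)) ^ (α - 1 / 2 - 1))

noncomputable def HH (α : ℂ) (x : ℝ) : ℂ :=
  -2 * α * ((x : ℂ) ^ (α - 1 / 2 - 1) * (1 - (x : ℂ)) ^ ((1 / 2 : ℂ) - 1))
    + 2 * α * ((x : ℂ) ^ ((1 / 2 : ℂ) - 1) * (1 - (x : ℂ)) ^ (α - 1 / 2 - 1))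

noncomputable def FF (α : ℂ) (x : ℝ) : ℂ :=
  (1 - (x : ℂ) ^ α - ((1 - x : ℝ) : ℂ) ^ α) * ((2 * (2 * x - 1) : ℝ) : ℂ)
    * (((x * (1 - x) : ℝ) ^ (-(1 / 2) : ℝ) : ℝ) : ℂ)

lemma hasDerivAt_cpow_real (α : ℂ) {x : ℝ} (hx : 0 < x) :
    HasDerivAt (fun y : ℝ => (y : ℂ) ^ α) (α * (x : ℂ) ^ (α - 1)) x := by
  have U := (hasDerivAt_id (x : ℂ)).cpow_const (c := α) (Or.inl (by simpa using hx))
  simpa using U.comp_ofReal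

lemma hasDerivAt_one_sub_cpow (α : ℂ) {x : ℝ} (hx : x < 1) :
    HasDerivAt (fun y : ℝ => ((1 - y : ℝ) : ℂ) ^ α)
      (α * ((1 - x : ℝ) : ℂ) ^ (α - 1) * (-1)) x := by
  have inner : HasDerivAt (fun y : ℝ => 1 - y) (-1) x := (hasDerivAt_id x).const_sub 1
  have outer := hasDerivAt_cpow_real α (x := 1 - x) (by linarith)
  have h2 := outer.scomp_of_eq x inner rfl
  rw [neg_one_smul] at h2
  simp only [Function.comp_def] at h2
  refine h2.congr_deriv ?_
  ring

lemma cpow_split {z : ℂ} (hz : z ≠ 0) {a b c : ℂ} (n : ℕ) (h : a = b + n + c) :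
    z ^ a = z ^ b * z ^ (n : ℕ) * z ^ c := by
  rw [h, cpow_add _ _ hz, cpow_add _ _ hz, cpow_natCast]

lemma cpow_split' {z : ℂ} (hz : z ≠ 0) {a b : ℂ} (n : ℕ) (h : a = b + n) :
    z ^ a = z ^ b * z ^ (n : ℕ) := by
  rw [h, cpow_add _ _ hz, cpow_natCast]

lemma hasDerivAt_FF (α : ℂ) {x : ℝ} (hx : x ∈ Ioo (0:ℝ) 1) :
    HasDerivAt (FF α) (ff α x - GG α x - HH α x) x := by
  obtain ⟨hx0, hx1⟩ := hx
  have h1x : (0:ℝ) < 1 - x := by linarith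
  have ht : (0:ℝ) < x * (1 - x) := mul_pos hx0 h1x
  have hA := hasDerivAt_cpow_real α hx0
  have hB := hasDerivAt_one_sub_cpow α hx1
  have hu : HasDerivAt (fun y : ℝ => 1 - (y : ℂ) ^ α - ((1 - y : ℝ) : ℂ) ^ α)
      (-(α * (x : ℂ) ^ (α - 1)) - α * ((1 - x : ℝ) : ℂ) ^ (α - 1) * (-1)) x :=
    (hA.const_sub 1).sub hB
  have hp : HasDerivAt (fun y : ℝ => ((2 * (2 * y - 1) : ℝ) : ℂ)) ((4 : ℝ) : ℂ) x := by
    have h4 : HasDerivAt (fun y : ℝ => 2 * (2 * y - 1)) 4 x := by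
      exact ((((hasDerivAt_id x).const_mul 2).sub_const 1).const_mul 2).congr_deriv (by norm_num)
    exact h4.ofReal_comp
  have hqr : HasDerivAt (fun y : ℝ => (y * (1 - y)) ^ (-(1 / 2) : ℝ))
      (-(1 / 2) * (x * (1 - x)) ^ (-(3 / 2) : ℝ) * (1 - 2 * x)) x := by
    have hin : HasDerivAt (fun y : ℝ => y * (1 - y)) (1 - 2 * x) x := by
      have h := (hasDerivAt_id x).mul ((hasDerivAt_id x).const_sub 1)
      simp only [id] at h
      refine h.congr_deriv ?_
      ring
    have hout := Real.hasDerivAt_rpow_const (x := x * (1 - x)) (p := -(1 / 2))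
      (Or.inl (ne_of_gt ht))
    have hcomp := hout.comp x hin
    refine hcomp.congr_deriv ?_
    rw [show (-(3 / 2) : ℝ) = -(1 / 2) - 1 by norm_num]
  have hq := hqr.ofReal_comp
  have hF := (hu.mul hp).mul hq
  unfold FF ff GG HH
  refine hF.congr_deriv (Eq.symm ?_)
  simp only [Pi.mul_apply]
  -- now the algebra
  have hxc : (x : ℂ) ≠ 0 := ofReal_ne_zero.mpr (ne_of_gt hx0)
  have hcast : ((1 - x : ℝ) : ℂ) = 1 - (x : ℂ) := by push_cast; ring
  have hdc : (1 : ℂ) - (x : ℂ) ≠ 0 := by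
    rw [← hcast]; exact ofReal_ne_zero.mpr (ne_of_gt h1x)
  have hqe : (((x * (1 - x) : ℝ) ^ (-(1 / 2) : ℝ) : ℝ) : ℂ)
      = (x : ℂ) ^ (-(1 / 2) : ℂ) * (1 - (x : ℂ)) ^ (-(1 / 2) : ℂ) := by
    rw [Real.mul_rpow hx0.le h1x.le, ofReal_mul, Complex.ofReal_cpow hx0.le,
      Complex.ofReal_cpow h1x.le, hcast]
    norm_num
  have hM : (((x * (1 - x) : ℝ) ^ (-(3 / 2) : ℝ) : ℝ) : ℂ) * ((x : ℂ) * (1 - (x : ℂ)))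
      = (x : ℂ) ^ (-(1 / 2) : ℂ) * (1 - (x : ℂ)) ^ (-(1 / 2) : ℂ) := by
    rw [← hqe, show (x : ℂ) * (1 - (x : ℂ)) = ((x * (1 - x) : ℝ) : ℂ) by push_cast; ring,
      ← ofReal_mul, ← Real.rpow_add_one (ne_of_gt ht)]
    norm_num
  have hS : (x : ℂ) ^ (-(1 / 2) : ℂ) * (x : ℂ) ^ (-(1 / 2) : ℂ) * (x : ℂ) = 1 := by
    have h := cpow_split' hxc (a := (0:ℂ)) (b := -(1/2) + -(1/2)) 1 (by ring)
    rw [cpow_add _ _ hxc] at h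
    simpa using h.symm
  have hT : (1 - (x : ℂ)) ^ (-(1 / 2) : ℂ) * (1 - (x : ℂ)) ^ (-(1 / 2) : ℂ) * (1 - (x : ℂ))
      = 1 := by
    have h := cpow_split' hdc (a := (0:ℂ)) (b := -(1/2) + -(1/2)) 1 (by ring)
    rw [cpow_add _ _ hdc] at h
    simpa using h.symm
  have r1 : (x : ℂ) ^ α = (x : ℂ) ^ (α - 1 / 2 - 1) * (x : ℂ) ^ (2 : ℕ) * (x : ℂ) ^ (-(1/2) : ℂ) :=
    cpow_split hxc 2 (by push_cast; ring)
  have r2 : (1 - (x : ℂ)) ^ α = (1 - (x : ℂ)) ^ (α - 1 / 2 - 1) * (1 - (x : ℂ)) ^ (2 : ℕ)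
      * (1 - (x : ℂ)) ^ (-(1/2) : ℂ) := cpow_split hdc 2 (by push_cast; ring)
  have r3 : (x : ℂ) ^ (α - 1) = (x : ℂ) ^ (α - 1 / 2 - 1) * (x : ℂ) ^ (1 : ℕ)
      * (x : ℂ) ^ (-(1/2) : ℂ) := cpow_split hxc 1 (by push_cast; ring)
  have r4 : (1 - (x : ℂ)) ^ (α - 1) = (1 - (x : ℂ)) ^ (α - 1 / 2 - 1) * (1 - (x : ℂ)) ^ (1 : ℕ)
      * (1 - (x : ℂ)) ^ (-(1/2) : ℂ) := cpow_split hdc 1 (by push_cast; ring)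
  have r5 : (x : ℂ) ^ (α + 1 / 2 - 1) = (x : ℂ) ^ (α - 1 / 2 - 1) * (x : ℂ) ^ (1 : ℕ) :=
    cpow_split' hxc 1 (by push_cast; ring)
  have r6 : (x : ℂ) ^ ((3 / 2 : ℂ) - 1) = (x : ℂ) ^ (-(1/2) : ℂ) * (x : ℂ) ^ (1 : ℕ) :=
    cpow_split' hxc 1 (by push_cast; norm_num)
  have r7a : (1 - (x : ℂ)) ^ ((1 / 2 : ℂ) - 1) = (1 - (x : ℂ)) ^ (-(1/2) : ℂ) := by norm_num
  have r7b : (x : ℂ) ^ ((1 / 2 : ℂ) - 1) = (x : ℂ) ^ (-(1/2) : ℂ) := by norm_num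
  rw [hcast, hqe, r1, r2, r3, r4, r5, r6, r7a, r7b]
  push_cast
  set S := (x : ℂ) ^ (-(1/2) : ℂ)
  set T := (1 - (x : ℂ)) ^ (-(1/2) : ℂ)
  set X := (x : ℂ) ^ (α - 1 / 2 - 1)
  set Y := (1 - (x : ℂ)) ^ (α - 1 / 2 - 1)
  set M := (((x * (1 - x) : ℝ) ^ (-(3 / 2) : ℝ) : ℝ) : ℂ)
  linear_combination (α * X * T * (4 * (x:ℂ) - 2)) * hS
    - (α * Y * S * (4 * (x:ℂ) - 2)) * hT
    + (4 * (1 - X * (x:ℂ)^2 * S - Y * (1 - (x:ℂ))^2 * T)) * hM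
lemma exists_bound (α : ℂ) :
    ∃ K : ℝ, 0 ≤ K ∧ ∀ x ∈ Icc (0:ℝ) (1/2), ‖1 - ((1 - x : ℝ) : ℂ) ^ α‖ ≤ K * x := by
  have hcont : ContinuousOn (fun y : ℝ => α * ((1 - y : ℝ) : ℂ) ^ (α - 1) * (-1))
      (Icc (0:ℝ) (1/2)) := by
    refine (ContinuousOn.mul ?_ continuousOn_const)
    refine continuousOn_const.mul (ContinuousOn.cpow ?_ continuousOn_const ?_)
    · exact (Complex.continuous_ofReal.comp (continuous_const.sub continuous_id)).continuousOn
    · intro y hy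
      exact Complex.ofReal_mem_slitPlane.2 (by simp at hy ⊢; linarith [hy.2])
  obtain ⟨K, hK⟩ := (isCompact_Icc (a := (0:ℝ)) (b := 1/2)).exists_bound_of_continuousOn hcont
  refine ⟨K, le_trans (norm_nonneg _) (hK 0 ⟨le_refl 0, by norm_num⟩), ?_⟩
  intro x hx
  have hd : ∀ y ∈ Icc (0:ℝ) (1/2),
      HasDerivWithinAt (fun y : ℝ => ((1 - y : ℝ) : ℂ) ^ α)
        (α * ((1 - y : ℝ) : ℂ) ^ (α - 1) * (-1)) (Icc (0:ℝ) (1/2)) y := fun y hy =>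
    (hasDerivAt_one_sub_cpow α (by linarith [hy.2])).hasDerivWithinAt
  have key := (convex_Icc (0:ℝ) (1/2)).norm_image_sub_le_of_norm_hasDerivWithin_le
    hd hK hx ⟨le_refl 0, by norm_num⟩
  have h0 : ((1 - (0:ℝ) : ℝ) : ℂ) ^ α = 1 := by norm_num
  rw [h0] at key
  have : ‖(0:ℝ) - x‖ = x := by
    rw [zero_sub, norm_neg, Real.norm_eq_abs, _root_.abs_of_nonneg hx.1]
  rwa [this] at key


lemma ff_one_sub (α : ℂ) (x : ℝ) : ff α (1 - x) = ff α x := by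
  unfold ff
  rw [show (1 : ℝ) - (1 - x) = x by ring, mul_comm (1 - x) x]
  ring

lemma FF_one_sub (α : ℂ) (x : ℝ) : FF α (1 - x) = - FF α x := by
  unfold FF
  rw [show (1 : ℝ) - (1 - x) = x by ring, mul_comm (1 - x) x]
  push_cast
  ring

lemma ff_integrable_left (α : ℂ) (hα : 1 / 2 < α.re) :
    IntervalIntegrable (ff α) volume 0 (1 / 2) := by
  obtain ⟨K, hK0, hK⟩ := exists_bound α
  constructor
  case right => rw [Ioc_eq_empty (by norm_num)]; exact integrableOn_empty
  have meas : AEStronglyMeasurable (ff α) (volume.restrict (Ioc (0:ℝ) (1/2))) := by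
    unfold ff
    apply Measurable.aestronglyMeasurable
    fun_prop
  refine Integrable.mono'
    (g := fun x => (2:ℝ) ^ ((3:ℝ)/2) * (K * x ^ (-(1/2):ℝ) + x ^ (α.re - 3/2))) ?_ meas ?_
  · have h1 : IntervalIntegrable (fun x : ℝ => x ^ (-(1/2):ℝ)) volume 0 (1/2) :=
      intervalIntegral.intervalIntegrable_rpow' (by norm_num)
    have h2 : IntervalIntegrable (fun x : ℝ => x ^ (α.re - 3/2)) volume 0 (1/2) :=
      intervalIntegral.intervalIntegrable_rpow' (by linarith)
    exact (((h1.const_mul K).add h2).const_mul ((2:ℝ) ^ ((3:ℝ)/2))).1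
  · rw [ae_restrict_iff' measurableSet_Ioc]
    refine ae_of_all _ fun x hx => ?_
    obtain ⟨hx0, hx2⟩ := hx
    have h1x : (0:ℝ) < 1 - x := by linarith
    have ht : (0:ℝ) < x * (1 - x) := mul_pos hx0 h1x
    have hMnn : (0:ℝ) ≤ (x * (1 - x)) ^ (-(3/2):ℝ) := Real.rpow_nonneg ht.le _
    have hMC : ‖((((x * (1 - x) : ℝ)) ^ (-(3/2):ℝ) : ℝ) : ℂ)‖ = (x * (1 - x)) ^ (-(3/2):ℝ) := by
      rw [Complex.norm_real, Real.norm_eq_abs, _root_.abs_of_nonneg hMnn]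
    have hub : ‖1 - (x : ℂ) ^ α - ((1 - x : ℝ) : ℂ) ^ α‖ ≤ K * x + x ^ α.re := by
      have e : (1 : ℂ) - (x : ℂ) ^ α - ((1 - x : ℝ) : ℂ) ^ α
          = (1 - ((1 - x : ℝ) : ℂ) ^ α) - (x : ℂ) ^ α := by ring
      rw [e]
      refine le_trans (norm_sub_le _ _) (add_le_add (hK x ⟨hx0.le, hx2⟩) ?_)
      rw [Complex.norm_cpow_eq_rpow_re_of_pos hx0]
    have hMb : (x * (1 - x)) ^ (-(3/2):ℝ) ≤ x ^ (-(3/2):ℝ) * (2:ℝ) ^ ((3:ℝ)/2) := by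
      rw [Real.mul_rpow hx0.le h1x.le]
      refine mul_le_mul_of_nonneg_left ?_ (Real.rpow_nonneg hx0.le _)
      have h12 : ((1:ℝ)/2) ^ (-(3/2):ℝ) = (2:ℝ) ^ ((3:ℝ)/2) := by
        rw [one_div, Real.inv_rpow (by norm_num), ← Real.rpow_neg (by norm_num)]
        norm_num
      rw [← h12]
      exact Real.rpow_le_rpow_of_nonpos (by norm_num) (by linarith) (by norm_num)
    have hnn : (0:ℝ) ≤ K * x + x ^ α.re :=
      add_nonneg (mul_nonneg hK0 hx0.le) (Real.rpow_nonneg hx0.le _)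
    calc ‖ff α x‖ = ‖1 - (x : ℂ) ^ α - ((1 - x : ℝ) : ℂ) ^ α‖ * ((x * (1 - x)) ^ (-(3/2):ℝ)) := by
          unfold ff; rw [norm_mul, hMC]
      _ ≤ (K * x + x ^ α.re) * ((x * (1 - x)) ^ (-(3/2):ℝ)) :=
          mul_le_mul_of_nonneg_right hub hMnn
      _ ≤ (K * x + x ^ α.re) * (x ^ (-(3/2):ℝ) * (2:ℝ) ^ ((3:ℝ)/2)) :=
          mul_le_mul_of_nonneg_left hMb hnn
      _ = (2:ℝ) ^ ((3:ℝ)/2) * (K * x ^ (-(1/2):ℝ) + x ^ (α.re - 3/2)) := by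
          have e1 : x ^ (-(1/2):ℝ) = x * x ^ (-(3/2):ℝ) := by
            rw [show (-(1/2):ℝ) = 1 + -(3/2) by norm_num, Real.rpow_add hx0, Real.rpow_one]
          have e2 : x ^ (α.re - 3/2) = x ^ α.re * x ^ (-(3/2):ℝ) := by
            rw [show α.re - 3/2 = α.re + -(3/2) by ring, Real.rpow_add hx0]
          rw [e1, e2]; ring

lemma ff_integrable (α : ℂ) (hα : 1 / 2 < α.re) : IntervalIntegrable (ff α) volume 0 1 := by
  refine (ff_integrable_left α hα).trans (b := 1/2) ?_
  have h := (ff_integrable_left α hα).comp_sub_left 1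
  norm_num at h
  have he : (fun x => ff α (1 - x)) = ff α := funext fun x => ff_one_sub α x
  rw [he] at h
  exact h.symm

lemma tendsto_rpow_zero (p : ℝ) (hp : 0 < p) :
    Tendsto (fun x : ℝ => x ^ p) (𝓝[>] (0:ℝ)) (𝓝 0) := by
  have h := (Real.continuousAt_rpow_const 0 p (Or.inr hp.le)).tendsto
  rw [Real.zero_rpow hp.ne'] at h
  exact h.mono_left nhdsWithin_le_nhds

lemma tendsto_FF_zero (α : ℂ) (hα : 1 / 2 < α.re) :
    Tendsto (FF α) (𝓝[>] (0:ℝ)) (𝓝 0) := by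
  obtain ⟨K, hK0, hK⟩ := exists_bound α
  set C : ℝ := 2 * (2:ℝ) ^ ((1:ℝ)/2) with hC
  have hb : ∀ x ∈ Ioc (0:ℝ) (1/2),
      ‖FF α x‖ ≤ C * (K * x ^ ((1:ℝ)/2) + x ^ (α.re - 1/2)) := by
    intro x hx
    obtain ⟨hx0, hx2⟩ := hx
    have h1x : (0:ℝ) < 1 - x := by linarith
    have ht : (0:ℝ) < x * (1 - x) := mul_pos hx0 h1x
    have hub : ‖1 - (x : ℂ) ^ α - ((1 - x : ℝ) : ℂ) ^ α‖ ≤ K * x + x ^ α.re := by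
      have e : (1 : ℂ) - (x : ℂ) ^ α - ((1 - x : ℝ) : ℂ) ^ α
          = (1 - ((1 - x : ℝ) : ℂ) ^ α) - (x : ℂ) ^ α := by ring
      rw [e]
      refine le_trans (norm_sub_le _ _) (add_le_add (hK x ⟨hx0.le, hx2⟩) ?_)
      rw [Complex.norm_cpow_eq_rpow_re_of_pos hx0]
    have hnn : (0:ℝ) ≤ K * x + x ^ α.re :=
      add_nonneg (mul_nonneg hK0 hx0.le) (Real.rpow_nonneg hx0.le _)
    have h2b : |2 * (2 * x - 1)| ≤ 2 := by
      rw [abs_mul]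
      have : |2 * x - 1| ≤ 1 := by rw [abs_le]; constructor <;> linarith
      calc |(2:ℝ)| * |2 * x - 1| ≤ |(2:ℝ)| * 1 :=
            mul_le_mul_of_nonneg_left this (abs_nonneg _)
        _ = 2 := by norm_num
    have hqb : (x * (1 - x)) ^ (-(1/2):ℝ) ≤ x ^ (-(1/2):ℝ) * (2:ℝ) ^ ((1:ℝ)/2) := by
      rw [Real.mul_rpow hx0.le h1x.le]
      refine mul_le_mul_of_nonneg_left ?_ (Real.rpow_nonneg hx0.le _)
      have h12 : ((1:ℝ)/2) ^ (-(1/2):ℝ) = (2:ℝ) ^ ((1:ℝ)/2) := by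
        rw [one_div, Real.inv_rpow (by norm_num), ← Real.rpow_neg (by norm_num)]
        norm_num
      rw [← h12]
      exact Real.rpow_le_rpow_of_nonpos (by norm_num) (by linarith) (by norm_num)
    have hFFn : ‖FF α x‖ = ‖1 - (x : ℂ) ^ α - ((1 - x : ℝ) : ℂ) ^ α‖ * |2 * (2 * x - 1)|
        * ((x * (1 - x)) ^ (-(1/2):ℝ)) := by
      unfold FF
      rw [norm_mul, norm_mul, Complex.norm_real ((2 * (2 * x - 1) : ℝ)),
        Real.norm_eq_abs, Complex.norm_real (((x * (1 - x) : ℝ) ^ (-(1/2):ℝ) : ℝ)),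
        Real.norm_eq_abs, _root_.abs_of_nonneg (Real.rpow_nonneg ht.le _)]
    rw [hFFn]
    calc ‖1 - (x : ℂ) ^ α - ((1 - x : ℝ) : ℂ) ^ α‖ * |2 * (2 * x - 1)|
          * ((x * (1 - x)) ^ (-(1/2):ℝ))
        ≤ ((K * x + x ^ α.re) * 2) * (x ^ (-(1/2):ℝ) * (2:ℝ) ^ ((1:ℝ)/2)) := by
          refine mul_le_mul (mul_le_mul hub h2b (abs_nonneg _) hnn) hqb
            (Real.rpow_nonneg ht.le _) (by positivity)
      _ = C * (K * x ^ ((1:ℝ)/2) + x ^ (α.re - 1/2)) := by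
          have e1 : x ^ ((1:ℝ)/2) = x * x ^ (-(1/2):ℝ) := by
            have h := Real.rpow_add hx0 1 (-(1/2))
            rw [Real.rpow_one] at h
            convert h using 2
            norm_num
          have e2 : x ^ (α.re - 1/2) = x ^ α.re * x ^ (-(1/2):ℝ) := by
            have h := Real.rpow_add hx0 α.re (-(1/2))
            convert h using 2
            ring
          rw [hC]
          linear_combination (-(2 * (2:ℝ) ^ ((1:ℝ)/2) * K)) * e1 - (2 * (2:ℝ) ^ ((1:ℝ)/2)) * e2
  have hg : Tendsto (fun x : ℝ => C * (K * x ^ ((1:ℝ)/2) + x ^ (α.re - 1/2)))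
      (𝓝[>] (0:ℝ)) (𝓝 (C * (K * 0 + 0))) :=
    (((tendsto_rpow_zero _ (by norm_num)).const_mul K).add
      (tendsto_rpow_zero _ (by linarith))).const_mul C
  rw [show C * (K * 0 + 0) = 0 by ring] at hg
  refine squeeze_zero_norm' ?_ hg
  filter_upwards [Ioc_mem_nhdsGT_of_mem (by norm_num : (0:ℝ) ∈ Ico (0:ℝ) (1/2))] with x hx
  exact hb x hx

lemma tendsto_FF_one (α : ℂ) (hα : 1 / 2 < α.re) :
    Tendsto (FF α) (𝓝[<] (1:ℝ)) (𝓝 0) := by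
  have hmap : Tendsto (fun x : ℝ => 1 - x) (𝓝[<] (1:ℝ)) (𝓝[>] (0:ℝ)) := by
    rw [tendsto_nhdsWithin_iff]
    constructor
    · have h := (tendsto_const_nhds (x := (1:ℝ)) (f := 𝓝[<] (1:ℝ))).sub
        (tendsto_id.mono_left (nhdsWithin_le_nhds (s := Iio (1:ℝ))))
      simpa using h
    · filter_upwards [eventually_mem_nhdsWithin] with x hx
      simp only [mem_Iio] at hx
      simp only [mem_Ioi]
      linarith
  have h := (tendsto_FF_zero α hα).comp hmap
  have he : (FF α) ∘ (fun x : ℝ => 1 - x) = fun x => - FF α x :=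
    funext fun x => FF_one_sub α x
  rw [he] at h
  simpa using h.neg

lemma GG_integrable (α : ℂ) (hα : 1 / 2 < α.re) : IntervalIntegrable (GG α) volume 0 1 := by
  unfold GG
  have h1 := Complex.betaIntegral_convergent (u := α + 1/2) (v := 1/2)
    (by rw [Complex.add_re]; norm_num; linarith) (by norm_num)
  have h2 := Complex.betaIntegral_convergent (u := (3/2 : ℂ)) (v := α - 1/2)
    (by norm_num) (by rw [Complex.sub_re]; norm_num; linarith)
  exact (h1.sub h2).const_mul (4 * α)

lemma HH_integrable (α : ℂ) (hα : 1 / 2 < α.re) : IntervalIntegrable (HH α) volume 0 1 := by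
  unfold HH
  have h3 := Complex.betaIntegral_convergent (u := α - 1/2) (v := 1/2)
    (by rw [Complex.sub_re]; norm_num; linarith) (by norm_num)
  have h4 := Complex.betaIntegral_convergent (u := (1/2 : ℂ)) (v := α - 1/2)
    (by norm_num) (by rw [Complex.sub_re]; norm_num; linarith)
  exact (h3.const_mul (-2 * α)).add (h4.const_mul (2 * α))

lemma GG_integral (α : ℂ) (hα : 1 / 2 < α.re) :
    ∫ x in (0:ℝ)..1, GG α x = 4 * α * (Complex.betaIntegral (α + 1 / 2) (1 / 2) -
      Complex.betaIntegral (3 / 2) (α - 1 / 2)) := by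
  unfold GG
  have h1 := Complex.betaIntegral_convergent (u := α + 1/2) (v := 1/2)
    (by rw [Complex.add_re]; norm_num; linarith) (by norm_num)
  have h2 := Complex.betaIntegral_convergent (u := (3/2 : ℂ)) (v := α - 1/2)
    (by norm_num) (by rw [Complex.sub_re]; norm_num; linarith)
  rw [intervalIntegral.integral_const_mul, intervalIntegral.integral_sub h1 h2,
    Complex.betaIntegral, Complex.betaIntegral]

lemma HH_integral (α : ℂ) (hα : 1 / 2 < α.re) : ∫ x in (0:ℝ)..1, HH α x = 0 := by
  unfold HH
  have h3 := Complex.betaIntegral_convergent (u := α - 1/2) (v := 1/2)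
    (by rw [Complex.sub_re]; norm_num; linarith) (by norm_num)
  have h4 := Complex.betaIntegral_convergent (u := (1/2 : ℂ)) (v := α - 1/2)
    (by norm_num) (by rw [Complex.sub_re]; norm_num; linarith)
  rw [intervalIntegral.integral_add (h3.const_mul (-2 * α)) (h4.const_mul (2 * α)),
    intervalIntegral.integral_const_mul, intervalIntegral.integral_const_mul,
    ← Complex.betaIntegral, ← Complex.betaIntegral,
    Complex.betaIntegral_symm (α - 1/2) (1/2)]
  ring

theorem integral_one_sub_cpow_beta (α : ℂ) (hα : 1 / 2 < α.re) :
    ∫ x in (0 : ℝ)..1,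
        (1 - (x : ℂ) ^ α - ((1 - x : ℝ) : ℂ) ^ α) *
          (((x * (1 - x) : ℝ) ^ (-(3 / 2) : ℝ) : ℝ) : ℂ) =
      4 * α * (Complex.betaIntegral (α + 1 / 2) (1 / 2) -
        Complex.betaIntegral (3 / 2) (α - 1 / 2)) := by
  have hint_f := ff_integrable α hα
  have hint_G := GG_integrable α hα
  have hint_H := HH_integrable α hα
  have hFTC := intervalIntegral.integral_eq_sub_of_hasDerivAt_of_tendsto
    (f := FF α) (f' := fun x => ff α x - GG α x - HH α x) zero_lt_one
    (fun x hx => hasDerivAt_FF α hx) ((hint_f.sub hint_G).sub hint_H)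
    (tendsto_FF_zero α hα) (tendsto_FF_one α hα)
  rw [intervalIntegral.integral_sub (hint_f.sub hint_G) hint_H,
    intervalIntegral.integral_sub hint_f hint_G] at hFTC
  have hG := GG_integral α hα
  have hH := HH_integral α hα
  show (∫ x in (0:ℝ)..1, ff α x) = _
  linear_combination hFTC + hG + hH
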